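/- Let X be a nonempty set, H ⊆ Sym(X) a permutation group, and f : X → H a map satisfying: (1) f(X) generates H, (2) f_x(x) = x for all x ∈ X, and (3) f_{f_y(x)} ∘ f_y = f_{f_x(y)} ∘ f_x for all x,y ∈ X. Then the map r : X × X → X × X defined by r(x,y) = (f_x(y), f_y⁻¹(x)) is a non-degenerate involutive square-free set-theoretic solution of the Yang–Baxter equation, and the subgroup of Sym(X) generated by {f_x : x ∈ X} equals H. -/

import Mathlib

namespace YBPaper

variable {X : Type*}

/-- Left translation: `lact r x y = ˣy`. -/
def lact (r : X × X → X × X) (x y : X) : X := (r (x, y)).1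

/-- Right translation: `ract r x y = xʸ`. -/
def ract (r : X × X → X × X) (x y : X) : X := (r (x, y)).2

def r12 (r : X × X → X × X) : X × X × X → X × X × X :=
  fun p => ((r (p.1, p.2.1)).1, (r (p.1, p.2.1)).2, p.2.2)

def r23 (r : X × X → X × X) : X × X × X → X × X × X :=
  fun p => (p.1, r (p.2.1, p.2.2))

/-- A non-degenerate involutive square-free set-theoretic solution of the YBE. -/
structure IsSquareFreeSolution (r : X × X → X × X) : Prop where
  nondegL : ∀ x : X, Function.Bijective fun y => (r (x, y)).1
  nondegR : ∀ y : X, Function.Bijective fun x => (r (x, y)).2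
  invol : ∀ p : X × X, r (r p) = p
  sqfree : ∀ x : X, r (x, x) = (x, x)
  braided : ∀ p : X × X × X, r12 r (r23 r (r12 r p)) = r23 r (r12 r (r23 r p))

/-- `relk l k x y` means the images of `x` and `y` in the `k`-th retract coincide. -/
def relk (l : X → X → X) : ℕ → X → X → Prop
  | 0 => fun x y => x = y
  | (k+1) => fun x y => ∀ z : X, relk l k (l x z) (l y z)

/-- `mplLe l m` : the `m`-th retract is a one-element solution, i.e. `mpl ≤ m`. -/
def mplLe (l : X → X → X) (m : ℕ) : Prop := ∀ x y : X, relk l m x y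

/-- `mplEq l m` : the multipermutation level is exactly `m`. -/
def mplEq (l : X → X → X) (m : ℕ) : Prop := mplLe l m ∧ ∀ k < m, ¬ mplLe l k

/-- The set of left translations, as permutations. -/
def lperms (r : X × X → X × X) : Set (Equiv.Perm X) :=
  {σ : Equiv.Perm X | ∃ x : X, ∀ y : X, σ y = (r (x, y)).1}

/-- The YB permutation group `𝒢(X,r)`, generated by the left translations. -/
def Gcal (r : X × X → X × X) : Subgroup (Equiv.Perm X) := Subgroup.closure (lperms r)


/-- permutation groups with a map `f` satisfying the three conditions
give square-free solutions with YB permutation group `H`. -/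
theorem stmt1 {X : Type*} [Nonempty X] (H : Subgroup (Equiv.Perm X))
    (f : X → Equiv.Perm X)
    (hmem : ∀ x : X, f x ∈ H)
    (hgen : Subgroup.closure (Set.range f) = H)
    (hfix : ∀ x : X, f x x = x)
    (hcomp : ∀ x y : X, f (f y x) * f y = f (f x y) * f x) :
    IsSquareFreeSolution (fun p : X × X => (f p.1 p.2, (f p.2)⁻¹ p.1)) ∧
      Subgroup.closure {σ : Equiv.Perm X | ∃ x : X, σ = f x} = H := by
  have star : ∀ a b : X, f (f a b) a = f b a := by
    intro a b
    have h := congrArg (fun σ : Equiv.Perm X => σ a) (hcomp a b)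
    simpa [hfix] using h.symm
  have key : ∀ a b c : X, f (f a b) (f a c) = f (f b a) (f b c) := by
    intro a b c
    have h := congrArg (fun σ : Equiv.Perm X => σ c) (hcomp b a)
    simpa using h
  have fixinv : ∀ x : X, (f x)⁻¹ x = x := by
    intro x
    have h := congrArg (fun y => (f x)⁻¹ y) (hfix x)
    simpa using h.symm
  constructor
  · refine ⟨?_, ?_, ?_, ?_, ?_⟩
    · intro x; exact (f x).bijective
    · intro y; exact ((f y)⁻¹ : Equiv.Perm X).bijective
    · rintro ⟨x, y⟩
      obtain ⟨v, hv⟩ := (f y).surjective x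
      simp only [← hv, Equiv.Perm.inv_def, Equiv.symm_apply_apply, star]
    · intro x
      simp [hfix, fixinv]
    · have braid' : ∀ z w t : X,
          r12 (fun p : X × X => (f p.1 p.2, (f p.2)⁻¹ p.1))
            (r23 (fun p : X × X => (f p.1 p.2, (f p.2)⁻¹ p.1))
              (r12 (fun p : X × X => (f p.1 p.2, (f p.2)⁻¹ p.1))
                (f (f z w) (f z t), f z w, z))) =
          r23 (fun p : X × X => (f p.1 p.2, (f p.2)⁻¹ p.1))
            (r12 (fun p : X × X => (f p.1 p.2, (f p.2)⁻¹ p.1))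
              (r23 (fun p : X × X => (f p.1 p.2, (f p.2)⁻¹ p.1))
                (f (f z w) (f z t), f z w, z))) := by
        intro z w t
        simp only [r12, r23, Equiv.Perm.inv_def, Equiv.symm_apply_apply, star]
        rw [key z t w, key z w t]
        simp only [star, Equiv.Perm.inv_def, Equiv.symm_apply_apply, Prod.mk.injEq]
        exact ⟨key t w z, trivial⟩
      rintro ⟨x, y, z⟩
      obtain ⟨w, hw⟩ := (f z).surjective y
      obtain ⟨t, ht⟩ := (f z).surjective ((f y)⁻¹ x)
      have hx : f (f z w) (f z t) = x := by rw [hw, ht, Equiv.Perm.inv_def, Equiv.apply_symm_apply]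
      rw [← hx, ← hw]
      exact braid' z w t
  · rw [← hgen]
    congr 1
    ext σ
    simp [eq_comm]


end YBPaper
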